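/- Let l ≥ 1, L = 2^l, F = [[1,0],[1,1]] over GF(2), and B_L = F^{⊗l} with rows and columns indexed 1,…,L. Fix i with 2 ≤ i ≤ L and let B̃_L(i) be obtained from B_L by replacing its first i−1 rows with zero rows. Then the minimum cardinality of a set S ⊆ {2,…,L} of column indices such that the GF(2)-sum of the columns of B̃_L(i) indexed by S equals the first column of B̃_L(i) is exactly 2L/2^{⌈log₂ i⌉} − 1; in particular, at least one such set S exists. -/

import Mathlib

/-- The 2×2 polarization kernel `F = [[1,0],[1,1]]` over `GF(2)`. -/
def polarF : Matrix (Fin 2) (Fin 2) (ZMod 2) := !![1, 0; 1, 1]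

/-- `polarB l` is the `l`-fold Kronecker power `F^{⊗l}` of the polarization kernel,
with rows and columns reindexed by `Fin (2^l)` (row-major order), so that
`B_L = B_{L/2} ⊗ F` with `L = 2^l`. -/
def polarB : (l : ℕ) → Matrix (Fin (2 ^ l)) (Fin (2 ^ l)) (ZMod 2)
  | 0 => 1
  | l + 1 =>
      Matrix.reindex (finProdFinEquiv.trans (finCongr (pow_succ 2 l).symm))
        (finProdFinEquiv.trans (finCongr (pow_succ 2 l).symm))
        (Matrix.kroneckerMap (· * ·) (polarB l) polarF)

/-- `polarBt l i` is the `i`-th polarization submatrix `B̃_L(i)` (with `i` 1-indexed,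
`L = 2^l`): the matrix obtained from `B_L` by replacing its first `i - 1` rows with zeros. -/
def polarBt (l : ℕ) (i : ℕ) : Matrix (Fin (2 ^ l)) (Fin (2 ^ l)) (ZMod 2) :=
  Matrix.of fun r c => if i - 1 ≤ r.val then polarB l r c else 0


lemma and_eq_left_iff {j r : ℕ} :
    j &&& r = j ↔ ∀ k, j.testBit k = true → r.testBit k = true := by
  constructor
  · intro h k hk
    have h2 := congrArg (fun x => x.testBit k) h
    simp only [Nat.testBit_and, hk, Bool.true_and] at h2
    exact h2
  · intro h
    apply Nat.eq_of_testBit_eq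
    intro k
    rw [Nat.testBit_and]
    cases hj : j.testBit k
    · simp
    · simp [h k hj]


lemma testBit_div_pow (x t k : ℕ) : (x / 2 ^ t).testBit k = x.testBit (k + t) := by
  rw [← Nat.shiftRight_eq_div_pow, Nat.testBit_shiftRight, Nat.add_comm]


lemma and_split (t j r : ℕ) :
    j &&& r = j ↔
      ((j / 2 ^ t) &&& (r / 2 ^ t) = j / 2 ^ t ∧ (j % 2 ^ t) &&& (r % 2 ^ t) = j % 2 ^ t) := by
  simp only [and_eq_left_iff, testBit_div_pow, Nat.testBit_mod_two_pow]
  constructor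
  · intro h
    refine ⟨fun k hk => h _ hk, fun k hk => ?_⟩
    simp only [Bool.and_eq_true, decide_eq_true_eq] at hk ⊢
    exact ⟨hk.1, h _ hk.2⟩
  · rintro ⟨h1, h2⟩ k hk
    by_cases hkt : k < t
    · have := h2 k (by simp [hkt, hk])
      simpa [hkt] using this
    · have := h1 (k - t) (by rw [Nat.sub_add_cancel (le_of_not_gt hkt)]; exact hk)
      rwa [Nat.sub_add_cancel (le_of_not_gt hkt)] at this


lemma polarB_apply : ∀ (l : ℕ) (r c : Fin (2 ^ l)),
    polarB l r c = if c.val &&& r.val = c.val then 1 else 0 := by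
  intro l
  induction l with
  | zero =>
    intro r c
    have h1 : r.val = 0 := by have := r.isLt; norm_num at this; omega
    have h2 : c.val = 0 := by have := c.isLt; norm_num at this; omega
    have hr : r = c := Fin.ext (by omega)
    subst hr
    simp [polarB, Matrix.one_apply, h2]
  | succ l ih =>
    intro r c
    have key : polarB (l+1) r c =
        polarB l ⟨r.val / 2, by have := r.isLt; have h2 : (2:ℕ)^(l+1) = 2^l*2 := pow_succ 2 l; omega⟩
          ⟨c.val / 2, by have := c.isLt; have h2 : (2:ℕ)^(l+1) = 2^l*2 := pow_succ 2 l; omega⟩ *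
          polarF ⟨r.val % 2, Nat.mod_lt _ (by norm_num)⟩
          ⟨c.val % 2, Nat.mod_lt _ (by norm_num)⟩ := by
      show (Matrix.reindex _ _ _) r c = _
      rw [Matrix.reindex_apply, Matrix.submatrix_apply]
      simp only [Equiv.symm_trans_apply, finCongr_symm, finCongr_apply,
        finProdFinEquiv_symm_apply]
      rfl
    rw [key, ih]
    have hF : ∀ a b : Fin 2, polarF a b = if b.val &&& a.val = b.val then 1 else 0 := by
      simp only [Fin.forall_fin_two]; decide
    rw [hF]
    have hsplit := and_split 1 c.val r.val
    rw [pow_one] at hsplit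
    by_cases hd : (c.val / 2) &&& (r.val / 2) = c.val / 2 <;>
      by_cases hm : (c.val % 2) &&& (r.val % 2) = c.val % 2 <;>
      simp [hd, hm, hsplit]
open Finset


lemma sum_range_two_mul {M : Type*} [AddCommMonoid M] (n : ℕ) (f : ℕ → M) :
    ∑ j ∈ range (2 * n), f j = ∑ j ∈ range n, (f (2 * j) + f (2 * j + 1)) := by
  induction n with
  | zero => simp
  | succ n ih =>
    have h : 2 * (n + 1) = (2 * n) + 1 + 1 := by ring
    rw [h, sum_range_succ, sum_range_succ, ih, sum_range_succ, add_assoc]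


lemma and_even (j r : ℕ) : (2 * j) &&& r = 2 * j ↔ j &&& (r / 2) = j := by
  rw [and_split 1]
  have h1 : (2 * j) / 2 ^ 1 = j := by omega
  have h2 : (2 * j) % 2 ^ 1 = 0 := by omega
  rw [h1, h2, Nat.zero_and]
  simp


lemma and_odd (j r : ℕ) : (2 * j + 1) &&& r = 2 * j + 1 ↔ (j &&& (r / 2) = j ∧ r % 2 = 1) := by
  rw [and_split 1]
  have h1 : (2 * j + 1) / 2 ^ 1 = j := by omega
  have h2 : (2 * j + 1) % 2 ^ 1 = 1 := by omega
  rw [h1, h2, pow_one]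
  constructor
  · rintro ⟨ha, hb⟩
    refine ⟨ha, ?_⟩
    have : r % 2 = 0 ∨ r % 2 = 1 := by omega
    rcases this with h | h
    · rw [h] at hb; simp at hb
    · exact h
  · rintro ⟨ha, hb⟩
    rw [hb]
    exact ⟨ha, rfl⟩


lemma Tlem : ∀ (l : ℕ) (s r : ℕ),
    (∑ j ∈ range (2 ^ l), if 2 ^ s ∣ j ∧ j &&& r = j then (1 : ZMod 2) else 0)
      = if ∀ k < l, s ≤ k → r.testBit k = false then 1 else 0 := by
  intro l
  induction l with
  | zero =>
    intro s r
    rw [pow_zero, Finset.sum_range_one]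
    simp [Nat.zero_and]
  | succ l ih =>
    intro s r
    have hpow : (2:ℕ) ^ (l + 1) = 2 * 2 ^ l := by rw [pow_succ]; ring
    rw [hpow, sum_range_two_mul]
    rcases Nat.eq_zero_or_pos s with hs | hs
    · subst hs
      simp only [pow_zero, one_dvd, true_and, and_even, and_odd]
      rcases Nat.even_or_odd r with hr | hr
      · have hr2 : r % 2 = 0 := Nat.even_iff.mp hr
        have e1 : ∀ j : ℕ, ((if j &&& (r / 2) = j then (1:ZMod 2) else 0)
            + if j &&& (r / 2) = j ∧ r % 2 = 1 then (1:ZMod 2) else 0)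
            = if 2 ^ 0 ∣ j ∧ j &&& (r / 2) = j then 1 else 0 := by
          intro j; simp [hr2]
        rw [Finset.sum_congr rfl fun j _ => e1 j, ih]
        have : (∀ k < l, 0 ≤ k → (r / 2).testBit k = false)
            ↔ (∀ k < l + 1, 0 ≤ k → r.testBit k = false) := by
          constructor
          · intro h k hk _
            match k with
            | 0 => rw [Nat.testBit_zero]; simp [hr2]
            | k + 1 => rw [Nat.testBit_succ]; exact h k (by omega) (by omega)
          · intro h k hk _
            rw [← Nat.testBit_succ]
            exact h (k + 1) (by omega) (by omega)
        simp only [this]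
      · have hr2 : r % 2 = 1 := Nat.odd_iff.mp hr
        have e1 : ∀ j : ℕ, ((if j &&& (r / 2) = j then (1:ZMod 2) else 0)
            + if j &&& (r / 2) = j ∧ r % 2 = 1 then (1:ZMod 2) else 0) = 0 := by
          intro j
          by_cases h : j &&& (r / 2) = j <;> simp [h, hr2] <;> decide
        rw [Finset.sum_congr rfl fun j _ => e1 j]
        have hneg : ¬ (∀ k < l + 1, r.testBit k = false) := by
          intro h
          have := h 0 (by omega)
          rw [Nat.testBit_zero] at this
          simp [hr2] at this
        simp only [Finset.sum_const_zero]
        simp [hneg]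
        exact ⟨0, Nat.zero_le _, by rw [Nat.testBit_zero]; simp [hr2]⟩
    · obtain ⟨s', rfl⟩ : ∃ s', s = s' + 1 := ⟨s - 1, by omega⟩
      have e1 : ∀ j : ℕ, ((if 2 ^ (s'+1) ∣ 2*j ∧ (2*j) &&& r = 2*j then (1:ZMod 2) else 0)
          + if 2 ^ (s'+1) ∣ 2*j+1 ∧ (2*j+1) &&& r = 2*j+1 then (1:ZMod 2) else 0)
          = if 2 ^ s' ∣ j ∧ j &&& (r / 2) = j then 1 else 0 := by
        intro j
        have hd1 : 2 ^ (s'+1) ∣ 2*j ↔ 2 ^ s' ∣ j := by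
          rw [pow_succ, mul_comm ((2:ℕ)^s') 2]
          exact Nat.mul_dvd_mul_iff_left (by norm_num : (0:ℕ) < 2)
        have hd2 : ¬ (2 ^ (s'+1) ∣ 2*j+1) := by
          intro hdvd
          have h2 : (2:ℕ) ∣ 2*j+1 := dvd_trans (dvd_pow_self 2 (Nat.succ_ne_zero s')) hdvd
          omega
        simp [hd1, hd2, and_even]
      rw [Finset.sum_congr rfl fun j _ => e1 j, ih]
      have : (∀ k < l, s' ≤ k → (r / 2).testBit k = false)
          ↔ (∀ k < l + 1, s' + 1 ≤ k → r.testBit k = false) := by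
        constructor
        · intro h k hk hsk
          match k with
          | k + 1 => rw [Nat.testBit_succ]; exact h k (by omega) (by omega)
        · intro h k hk hsk
          rw [← Nat.testBit_succ]
          exact h (k + 1) (by omega) (by omega)
      simp only [this]

lemma exists_bit {s l r : ℕ} (h1 : 2 ^ s ≤ r) (h2 : r < 2 ^ l) :
    ¬ (∀ k < l, s ≤ k → r.testBit k = false) := by
  intro h
  set k := Nat.log 2 r with hk
  have hr0 : r ≠ 0 := by have := Nat.one_le_two_pow (n := s); omega
  have hle : 2 ^ k ≤ r := Nat.pow_log_le_self 2 hr0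
  have hlt : r < 2 ^ (k + 1) := Nat.lt_pow_succ_log_self (by norm_num) r
  have hsk : s ≤ k := by
    by_contra hc
    have : k + 1 ≤ s := by omega
    have := Nat.pow_le_pow_right (by norm_num : 1 ≤ 2) this
    omega
  have hkl : k < l := by
    by_contra hc
    have : l ≤ k := by omega
    have := Nat.pow_le_pow_right (by norm_num : 1 ≤ 2) this
    omega
  have hbit : r.testBit k = true := by
    rw [Nat.testBit_eq_decide_div_mod_eq]
    have hdiv : r / 2 ^ k = 1 := by
      apply Nat.div_eq_of_lt_le
      · simpa using hle
      · have h2k : (2:ℕ) ^ (k+1) = 2 ^ k * 2 := pow_succ 2 k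
        omega
    simp [hdiv]
  have := h k hkl hsk
  rw [hbit] at this
  exact Bool.noConfusion this


lemma val_eq_aux {l t : ℕ} (ht : 1 ≤ t) (htl : t ≤ l) :
    (2 ^ l - 1) / 2 ^ (t - 1) = 2 * 2 ^ l / 2 ^ t - 1 ∧
      2 * 2 ^ l / 2 ^ t = 2 * 2 ^ (l - t) := by
  have h1 : 2 * 2 ^ l = 2 ^ t * (2 * 2 ^ (l - t)) := by
    rw [← pow_succ', ← pow_succ']
    rw [← pow_add]
    congr 1
    omega
  have h2 : 2 * 2 ^ l / 2 ^ t = 2 * 2 ^ (l - t) := by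
    rw [h1, Nat.mul_div_cancel_left _ (Nat.pow_pos (n := t) (by norm_num))]
  refine ⟨?_, h2⟩
  rw [h2]
  -- (2^l - 1) / 2^(t-1) = 2 * 2^(l-t) - 1
  have h3 : (2:ℕ) ^ l = 2 ^ (t-1) * (2 * 2 ^ (l - t)) := by
    rw [← pow_succ', ← pow_add]
    congr 1
    omega
  have hp1 : (0:ℕ) < 2 ^ (t-1) := Nat.pow_pos (by norm_num)
  have hp2 : (0:ℕ) < 2 ^ (l-t) := Nat.pow_pos (by norm_num)
  have h4 : (2 * 2 ^ (l - t) - 1) * 2 ^ (t-1) = 2 ^ l - 2 ^ (t-1) := by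
    rw [Nat.sub_mul, one_mul, mul_comm (2 * 2 ^ (l-t)) (2 ^ (t-1)), ← h3]
  have hle2 : (2:ℕ) ^ (t-1) ≤ 2 ^ l := Nat.pow_le_pow_right (by norm_num) (by omega)
  apply Nat.div_eq_of_lt_le
  · omega
  · have h5 : (2 * 2 ^ (l - t) - 1 + 1) * 2 ^ (t-1) = 2 ^ l := by
      have he : 2 * 2 ^ (l - t) - 1 + 1 = 2 * 2 ^ (l-t) := by omega
      rw [he, mul_comm, ← h3]
    omega

lemma polarBt_apply (l i : ℕ) (r j : Fin (2 ^ l)) :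
    polarBt l i r j
      = if i - 1 ≤ r.val then (if j.val &&& r.val = j.val then (1 : ZMod 2) else 0) else 0 := by
  show (if i - 1 ≤ r.val then polarB l r j else 0) = _
  rw [polarB_apply]


lemma polarBt_sum_iff (l i : ℕ) (S : Finset (Fin (2 ^ l))) :
    (∀ r : Fin (2 ^ l), ∑ j ∈ S, polarBt l i r j = polarBt l i r ⟨0, by positivity⟩)
      ↔ ∀ r : Fin (2 ^ l), i - 1 ≤ r.val →
          ∑ j ∈ S, (if j.val &&& r.val = j.val then (1 : ZMod 2) else 0) = 1 := by
  constructor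
  · intro h r hr
    have h2 := h r
    simp only [polarBt_apply, hr, if_true, Nat.zero_and] at h2
    simpa using h2
  · intro h r
    by_cases hr : i - 1 ≤ r.val
    · simp only [polarBt_apply, hr, if_true, Nat.zero_and]
      simpa using h r hr
    · simp [polarBt_apply, hr]

lemma mem_part (l : ℕ) (hl : 1 ≤ l) (i : ℕ) (h2 : 2 ≤ i) (hL : i ≤ 2 ^ l) :
    ∃ S : Finset (Fin (2 ^ l)),
      (∀ j ∈ S, j.val ≠ 0) ∧ S.card = 2 * 2 ^ l / 2 ^ Nat.clog 2 i - 1 ∧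
      ∀ r : Fin (2 ^ l), ∑ j ∈ S, polarBt l i r j = polarBt l i r ⟨0, by positivity⟩ := by
  set t := Nat.clog 2 i with hts
  have ht1 : 1 ≤ t := Nat.clog_pos (by norm_num) h2
  have htl : t ≤ l := (Nat.clog_le_iff_le_pow (by norm_num)).mpr hL
  have hi2t' : 2 ^ (t - 1) < i := Nat.pow_pred_clog_lt_self (by norm_num) (by omega)
  refine ⟨Finset.univ.filter fun j : Fin (2 ^ l) => j.val ≠ 0 ∧ 2 ^ (t - 1) ∣ j.val,
    fun j hj => (Finset.mem_filter.mp hj).2.1, ?_, ?_⟩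
  · -- cardinality
    rw [Finset.card_filter]
    rw [Fin.sum_univ_eq_sum_range (fun n => if n ≠ 0 ∧ 2 ^ (t - 1) ∣ n then 1 else 0) (2 ^ l)]
    rw [← Finset.card_filter]
    have hset : (Finset.range (2 ^ l)).filter (fun n => n ≠ 0 ∧ 2 ^ (t - 1) ∣ n)
        = (Finset.Ioc 0 (2 ^ l - 1)).filter (fun n => 2 ^ (t - 1) ∣ n) := by
      ext n
      simp only [Finset.mem_filter, Finset.mem_range, Finset.mem_Ioc]
      have hp : 1 ≤ 2 ^ l := Nat.one_le_two_pow
      constructor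
      · rintro ⟨ha, hb, hc⟩; exact ⟨⟨by omega, by omega⟩, hc⟩
      · rintro ⟨⟨ha, hb⟩, hc⟩; exact ⟨by omega, by omega, hc⟩
    rw [hset, Nat.Ioc_filter_dvd_card_eq_div]
    exact (val_eq_aux ht1 htl).1
  · rw [polarBt_sum_iff]
    intro r hr
    rw [Finset.sum_filter]
    have e1 : ∀ j : Fin (2 ^ l),
        (if j.val ≠ 0 ∧ 2 ^ (t - 1) ∣ j.val
          then (if j.val &&& r.val = j.val then (1 : ZMod 2) else 0) else 0)
        = if j.val ≠ 0 ∧ 2 ^ (t - 1) ∣ j.val ∧ j.val &&& r.val = j.val then 1 else 0 := by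
      intro j
      by_cases hP : j.val ≠ 0 ∧ 2 ^ (t - 1) ∣ j.val <;>
        by_cases hQ : j.val &&& r.val = j.val <;> simp [hP, hQ] <;> tauto
    rw [Finset.sum_congr rfl fun j _ => e1 j]
    rw [Fin.sum_univ_eq_sum_range
      (fun n => if n ≠ 0 ∧ 2 ^ (t - 1) ∣ n ∧ n &&& r.val = n then (1 : ZMod 2) else 0) (2 ^ l)]
    set G : ℕ → ZMod 2 := fun n => if 2 ^ (t - 1) ∣ n ∧ n &&& r.val = n then 1 else 0 with hG
    have hTG : ∑ n ∈ Finset.range (2 ^ l), G n = 0 := by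
      rw [hG, Tlem l (t - 1) r.val, if_neg]
      exact exists_bit (by omega) r.isLt
    have hg0 : (if (0 : ℕ) ≠ 0 ∧ 2 ^ (t - 1) ∣ 0 ∧ 0 &&& r.val = 0 then (1 : ZMod 2) else 0)
        = 0 := by simp
    rw [← Finset.sum_erase (Finset.range (2 ^ l)) hg0]
    have h2e : ∑ n ∈ (Finset.range (2 ^ l)).erase 0,
        (if n ≠ 0 ∧ 2 ^ (t - 1) ∣ n ∧ n &&& r.val = n then (1 : ZMod 2) else 0)
        = ∑ n ∈ (Finset.range (2 ^ l)).erase 0, G n := by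
      refine Finset.sum_congr rfl fun n hn => ?_
      have hne := (Finset.mem_erase.mp hn).1
      simp [hG, hne]
    rw [h2e]
    have h3 : G 0 + ∑ n ∈ (Finset.range (2 ^ l)).erase 0, G n
        = ∑ n ∈ Finset.range (2 ^ l), G n :=
      Finset.add_sum_erase _ G (Finset.mem_range.mpr (by positivity))
    have hG0 : G 0 = 1 := by simp [hG, Nat.zero_and]
    rw [hG0, hTG] at h3
    have := eq_neg_of_add_eq_zero_right h3
    rw [this]
    decide

lemma and_two_pow_sub_one {x t : ℕ} (hx : x < 2 ^ t) : x &&& (2 ^ t - 1) = x := by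
  rw [and_eq_left_iff]
  intro k hk
  rw [Nat.testBit_two_pow_sub_one]
  by_contra hc
  simp only [decide_eq_true_eq] at hc
  have hkt : t ≤ k := by omega
  have : x < 2 ^ k := lt_of_lt_of_le hx (Nat.pow_le_pow_right (by norm_num) hkt)
  rw [Nat.testBit_lt_two_pow this] at hk
  exact Bool.noConfusion hk


lemma lb_part (l : ℕ) (i : ℕ) (h2 : 2 ≤ i) (hL : i ≤ 2 ^ l)
    (S : Finset (Fin (2 ^ l))) (hS0 : ∀ j ∈ S, j.val ≠ 0)
    (hsum : ∀ r : Fin (2 ^ l), i - 1 ≤ r.val →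
      ∑ j ∈ S, (if j.val &&& r.val = j.val then (1 : ZMod 2) else 0) = 1) :
    2 * 2 ^ l / 2 ^ Nat.clog 2 i - 1 ≤ S.card := by
  set t := Nat.clog 2 i with hts
  have ht1 : 1 ≤ t := Nat.clog_pos (by norm_num) h2
  have htl : t ≤ l := (Nat.clog_le_iff_le_pow (by norm_num)).mpr hL
  have hi2t : i ≤ 2 ^ t := Nat.le_pow_clog (by norm_num) i
  have hpt : (0:ℕ) < 2 ^ t := Nat.pow_pos (by norm_num)
  set m := l - t with hms
  have hpm : (0:ℕ) < 2 ^ m := Nat.pow_pos (by norm_num)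
  have hml : (2:ℕ) ^ m * 2 ^ t = 2 ^ l := by rw [← pow_add]; congr 1; omega
  set P : ℕ → ℕ → ZMod 2 := fun h x =>
    ∑ j ∈ S.filter (fun j => j.val / 2 ^ t = h),
      (if (j.val % 2 ^ t) &&& x = j.val % 2 ^ t then (1 : ZMod 2) else 0) with hP
  have maps_to : ∀ j ∈ S, j.val / 2 ^ t ∈ Finset.range (2 ^ m) := by
    intro j _
    rw [Finset.mem_range, Nat.div_lt_iff_lt_mul hpt]
    calc j.val < 2 ^ l := j.isLt
      _ = 2 ^ m * 2 ^ t := hml.symm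
  -- main structural fact
  have fact1 : ∀ b x : ℕ, b < 2 ^ m → x < 2 ^ t → i - 1 ≤ b * 2 ^ t + x →
      ∑ h ∈ (Finset.range (2 ^ m)).filter (fun h => h &&& b = h), P h x = 1 := by
    intro b x hb hx hix
    have hbb : (b + 1) * 2 ^ t = b * 2 ^ t + 2 ^ t := by ring
    have hb2 : (b + 1) * 2 ^ t ≤ 2 ^ m * 2 ^ t := Nat.mul_le_mul_right _ (by omega)
    have hrlt : b * 2 ^ t + x < 2 ^ l := by omega
    have hs := hsum ⟨b * 2 ^ t + x, hrlt⟩ hix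
    simp only at hs
    have hdiv : (b * 2 ^ t + x) / 2 ^ t = b := by
      rw [Nat.add_comm, mul_comm, Nat.add_mul_div_left _ _ hpt, Nat.div_eq_of_lt hx, Nat.zero_add]
    have hmod : (b * 2 ^ t + x) % 2 ^ t = x := by
      rw [Nat.add_comm, mul_comm, Nat.add_mul_mod_self_left, Nat.mod_eq_of_lt hx]
    have e1 : ∀ j : Fin (2 ^ l),
        (if j.val &&& (b * 2 ^ t + x) = j.val then (1 : ZMod 2) else 0)
        = if (j.val / 2 ^ t) &&& b = j.val / 2 ^ t
              ∧ (j.val % 2 ^ t) &&& x = j.val % 2 ^ t then 1 else 0 := by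
      intro j
      exact if_congr (by rw [and_split t, hdiv, hmod]) rfl rfl
    rw [Finset.sum_congr rfl fun j _ => e1 j] at hs
    rw [← Finset.sum_fiberwise_of_maps_to maps_to
      (fun j : Fin (2 ^ l) => if (j.val / 2 ^ t) &&& b = j.val / 2 ^ t
          ∧ (j.val % 2 ^ t) &&& x = j.val % 2 ^ t then (1 : ZMod 2) else 0)] at hs
    have e2 : ∀ h ∈ Finset.range (2 ^ m),
        (∑ j ∈ S.filter (fun j => j.val / 2 ^ t = h),
          if (j.val / 2 ^ t) &&& b = j.val / 2 ^ t
            ∧ (j.val % 2 ^ t) &&& x = j.val % 2 ^ t then (1 : ZMod 2) else 0)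
        = if h &&& b = h then P h x else 0 := by
      intro h _
      by_cases hcase : h &&& b = h
      · rw [if_pos hcase, hP]
        refine Finset.sum_congr rfl fun j hj => ?_
        have hjh : j.val / 2 ^ t = h := (Finset.mem_filter.mp hj).2
        rw [hjh]
        simp [hcase]
      · rw [if_neg hcase]
        refine Finset.sum_eq_zero fun j hj => ?_
        have hjh : j.val / 2 ^ t = h := (Finset.mem_filter.mp hj).2
        rw [hjh]
        simp [hcase]
    rw [Finset.sum_congr rfl e2, ← Finset.sum_filter] at hs
    exact hs
  have fact2 : P 0 (2 ^ t - 1) = 1 := by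
    have h1 := fact1 0 (2 ^ t - 1) hpm (by omega) (by omega)
    have hset : (Finset.range (2 ^ m)).filter (fun h => h &&& 0 = h) = {0} := by
      ext h
      simp only [Finset.mem_filter, Finset.mem_range, Finset.mem_singleton, Nat.and_zero]
      constructor
      · rintro ⟨_, hh⟩; omega
      · rintro rfl; exact ⟨hpm, rfl⟩
    rw [hset, Finset.sum_singleton] at h1
    exact h1
  have fact3 : P 0 0 = 0 := by
    rw [hP]
    refine Finset.sum_eq_zero fun j hj => ?_
    obtain ⟨hjS, hjd⟩ := Finset.mem_filter.mp hj
    rw [if_neg]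
    intro hcontra
    rw [Nat.and_zero] at hcontra
    have h1 := hS0 j hjS
    have hdm : 2 ^ t * (j.val / 2 ^ t) + j.val % 2 ^ t = j.val := Nat.div_add_mod _ _
    rw [hjd, Nat.mul_zero, Nat.zero_add] at hdm
    omega
  have hadd : ∀ a : ZMod 2, a + a = 0 := by decide
  have fact4 : ∀ h : ℕ, h < 2 ^ m → h ≠ 0 → ∀ x : ℕ, x < 2 ^ t → P h x = P 0 x + 1 := by
    intro h
    induction h using Nat.strong_induction_on with
    | _ h IH =>
      intro hlt hne x hx
      set F := (Finset.range (2 ^ m)).filter (fun h' => h' &&& h = h') with hF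
      have hix : i - 1 ≤ h * 2 ^ t + x := by
        have h1 : 1 * 2 ^ t ≤ h * 2 ^ t := Nat.mul_le_mul_right _ (by omega)
        omega
      have hFs := fact1 h x hlt hx hix
      have h0F : 0 ∈ F := by
        rw [hF, Finset.mem_filter, Finset.mem_range]
        exact ⟨hpm, Nat.zero_and h⟩
      have hhF : h ∈ F := by
        rw [hF, Finset.mem_filter, Finset.mem_range]
        exact ⟨hlt, Nat.and_self h⟩
      have hh' : h ∈ F.erase 0 := Finset.mem_erase.mpr ⟨hne, hhF⟩
      set f : ℕ → ZMod 2 := fun h' => P h' x with hf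
      have eq1 : f 0 + ∑ h' ∈ F.erase 0, f h' = ∑ h' ∈ F, f h' :=
        Finset.add_sum_erase F f h0F
      have eq2 : f h + ∑ h' ∈ (F.erase 0).erase h, f h' = ∑ h' ∈ F.erase 0, f h' :=
        Finset.add_sum_erase _ f hh'
      -- parity of |F|
      have hTF : (F.card : ZMod 2) = 0 := by
        have hT := Tlem m 0 h
        rw [if_neg (exists_bit (by omega) hlt)] at hT
        simp only [pow_zero, one_dvd, true_and] at hT
        rw [← Finset.sum_filter] at hT
        rw [← hF] at hT
        rwa [Finset.sum_const, nsmul_eq_mul, mul_one] at hT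
      have hcard2 : F.card = ((F.erase 0).erase h).card + 2 := by
        have c1 := Finset.card_erase_add_one h0F
        have c2 := Finset.card_erase_add_one hh'
        omega
      have hrest : ∑ h' ∈ (F.erase 0).erase h, f h'
          = (((F.erase 0).erase h).card : ZMod 2) * (P 0 x + 1) := by
        have hcongr : ∀ h' ∈ (F.erase 0).erase h, f h' = P 0 x + 1 := by
          intro h' hh''
          have hne1 : h' ≠ h := (Finset.mem_erase.mp hh'').1
          have hh3 := Finset.mem_erase.mp ((Finset.mem_erase.mp hh'').2)
          have hne0 : h' ≠ 0 := hh3.1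
          obtain ⟨hh4, hh5⟩ := Finset.mem_filter.mp hh3.2
          have hle : h' ≤ h := by
            calc h' = h' &&& h := hh5.symm
              _ ≤ h := Nat.and_le_right
          exact IH h' (by omega) (by omega) hne0 x hx
        rw [Finset.sum_congr rfl hcongr, Finset.sum_const, nsmul_eq_mul]
      have hrc : (((F.erase 0).erase h).card : ZMod 2) = 0 := by
        have : (F.card : ZMod 2) = (((F.erase 0).erase h).card : ZMod 2) + 2 := by
          rw [hcard2]; push_cast; ring
        rw [hTF] at this
        have h20 : (2 : ZMod 2) = 0 := by decide
        rw [h20, add_zero] at this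
        exact this.symm
      rw [hrc, zero_mul] at hrest
      rw [hrest] at eq2
      rw [add_zero] at eq2
      rw [← eq2] at eq1
      rw [hFs] at eq1
      -- eq1 : f 0 + f h = 1
      calc P h x = P 0 x + (P 0 x + P h x) := by rw [← add_assoc, hadd, zero_add]
        _ = P 0 x + 1 := by rw [eq1]
  -- cardinality bounds
  have hcardS : S.card = ∑ h ∈ Finset.range (2 ^ m),
      (S.filter (fun j => j.val / 2 ^ t = h)).card :=
    Finset.card_eq_sum_card_fiberwise maps_to
  have hb : ∀ h ∈ Finset.range (2 ^ m),
      (if h = 0 then 1 else 2) ≤ (S.filter (fun j => j.val / 2 ^ t = h)).card := by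
    intro h hh
    rw [Finset.mem_range] at hh
    by_cases h0 : h = 0
    · subst h0
      rw [if_pos rfl]
      have hne : (S.filter (fun j => j.val / 2 ^ t = 0)).Nonempty := by
        rw [Finset.nonempty_iff_ne_empty]
        intro he
        have hf2 := fact2
        simp only [hP] at hf2
        rw [he, Finset.sum_empty] at hf2
        exact absurd hf2 (by decide)
      exact Finset.card_pos.mpr hne
    · rw [if_neg h0]
      have hP1 : P h 0 = 1 := by
        rw [fact4 h hh h0 0 hpt, fact3, zero_add]
      have hne : (S.filter (fun j => j.val / 2 ^ t = h)).Nonempty := by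
        rw [Finset.nonempty_iff_ne_empty]
        intro he
        simp only [hP] at hP1
        rw [he, Finset.sum_empty] at hP1
        exact absurd hP1 (by decide)
      by_contra hlt2
      have hc1 : (S.filter (fun j => j.val / 2 ^ t = h)).card = 1 := by
        have := Finset.card_pos.mpr hne
        omega
      obtain ⟨j, hj⟩ := Finset.card_eq_one.mp hc1
      have hP2 : P h (2 ^ t - 1) = 0 := by
        rw [fact4 h hh h0 (2 ^ t - 1) (by omega), fact2, hadd]
      simp only [hP] at hP2
      rw [hj, Finset.sum_singleton] at hP2
      rw [if_pos (and_two_pow_sub_one (Nat.mod_lt _ hpt))] at hP2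
      exact absurd hP2 (by decide)
  have hlb := Finset.sum_le_sum hb
  rw [← hcardS] at hlb
  have hsum1 : ∑ h ∈ Finset.range (2 ^ m), (if h = 0 then (1:ℕ) else 0) = 1 := by
    rw [Finset.sum_ite_eq' (Finset.range (2 ^ m)) 0 (fun _ => 1)]
    rw [if_pos (Finset.mem_range.mpr hpm)]
  have hsum2 : ∑ h ∈ Finset.range (2 ^ m), ((if h = 0 then (1:ℕ) else 2) + (if h = 0 then (1:ℕ) else 0)) = 2 * 2 ^ m := by
    have : ∀ h ∈ Finset.range (2 ^ m), ((if h = 0 then (1:ℕ) else 2) + (if h = 0 then (1:ℕ) else 0)) = 2 := by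
      intro h _
      by_cases h0 : h = 0 <;> simp [h0]
    rw [Finset.sum_congr rfl this, Finset.sum_const, Finset.card_range, smul_eq_mul, mul_comm]
  rw [Finset.sum_add_distrib, hsum1] at hsum2
  have hval := val_eq_aux ht1 htl
  have hme : (2:ℕ) ^ m = 2 ^ (l - t) := by rw [hms]
  omega


/-- For `l ≥ 1`, `L = 2^l` and `2 ≤ i ≤ L`, the minimum cardinality of a
set `S` of column indices other than the first such that the `GF(2)`-sum of the columns of
`B̃_L(i)` indexed by `S` equals the first column of `B̃_L(i)` is exactly
`2L/2^{⌈log₂ i⌉} − 1` (in particular such a set exists). -/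
theorem polarBt_min_representation (l : ℕ) (hl : 1 ≤ l) (i : ℕ) (h2 : 2 ≤ i)
    (hL : i ≤ 2 ^ l) :
    IsLeast
      {n : ℕ | ∃ S : Finset (Fin (2 ^ l)),
        (∀ j ∈ S, j.val ≠ 0) ∧ S.card = n ∧
        ∀ r : Fin (2 ^ l), ∑ j ∈ S, polarBt l i r j = polarBt l i r ⟨0, by positivity⟩}
      (2 * 2 ^ l / 2 ^ Nat.clog 2 i - 1) := by
  constructor
  · exact mem_part l hl i h2 hL
  · rintro n ⟨S, hS0, rfl, hsum⟩
    exact lb_part l i h2 hL S hS0 ((polarBt_sum_iff l i S).mp hsum)
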